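/- With G_δ as above and c_0 ≥ 1 fixed, there is a constant C > 0 depending only on c_0 such that G_δ'(r) ≥ C δ^3 for all r ∈ [-c_0-1, c_0+1] and all δ ∈ (0, 1/2]. -/

import Mathlib

open Set intervalIntegral

/-- The double-well potential `W(t) = (1 - t^2)^2 / 2`. -/
noncomputable def W (t : ℝ) : ℝ := (1 - t ^ 2) ^ 2 / 2

/-- Its derivative `W'(t) = 2 t (t^2 - 1)`. -/
noncomputable def Wp (t : ℝ) : ℝ := 2 * t * (t ^ 2 - 1)

/-- `G_δ'(r) = δ exp(-∫_{-c₀-1}^r (|W'(s)|+δ)/(2(W(s)+δ)) ds)`. -/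
noncomputable def gfun (c₀ δ r : ℝ) : ℝ :=
  δ * Real.exp (-(∫ s in (-c₀ - 1)..r, (|Wp s| + δ) / (2 * (W s + δ))))

lemma W_nonneg (t : ℝ) : 0 ≤ W t := by unfold W; positivity

lemma cont_W : Continuous W := by unfold W; continuity

lemma hasDerivAt_W (t : ℝ) : HasDerivAt W (Wp t) t := by
  have h : HasDerivAt (fun t : ℝ => 1 - t ^ 2) (-(2 * t)) t := by
    simpa using ((hasDerivAt_pow 2 t).const_sub 1)
  have h2 := (h.pow 2).div_const 2
  have : W = fun t : ℝ => (1 - t ^ 2) ^ 2 / 2 := rfl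
  rw [this, show Wp t = ↑2 * (1 - t ^ 2) ^ (2 - 1) * -(2 * t) / 2 by simp [Wp]; ring]
  exact h2

lemma hasDerivAt_g (δ t : ℝ) (hδ : 0 < δ) :
    HasDerivAt (fun t => Real.log (W t + δ) / 2) (Wp t / (2 * (W t + δ))) t := by
  have hpos : 0 < W t + δ := by linarith [W_nonneg t]
  have := (((hasDerivAt_W t).add_const δ).log (ne_of_gt hpos)).div_const 2
  refine this.congr_deriv ?_
  rw [div_div]
  ring_nf

lemma cont_f (δ : ℝ) (hδ : 0 < δ) :
    Continuous (fun s => (|Wp s| + δ) / (2 * (W s + δ))) := by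
  apply Continuous.div
  · exact (continuous_abs.comp (by unfold Wp; continuity)).add continuous_const
  · exact continuous_const.mul (cont_W.add continuous_const)
  · intro s; have := W_nonneg s; positivity

lemma cont_fa (δ : ℝ) (hδ : 0 < δ) :
    Continuous (fun s => |Wp s| / (2 * (W s + δ))) := by
  apply Continuous.div
  · exact continuous_abs.comp (by unfold Wp; continuity)
  · exact continuous_const.mul (cont_W.add continuous_const)
  · intro s; have := W_nonneg s; positivity

lemma cont_fd (δ : ℝ) (hδ : 0 < δ) :
    Continuous (fun s : ℝ => δ / (2 * (W s + δ))) := by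
  apply Continuous.div continuous_const
  · exact continuous_const.mul (cont_W.add continuous_const)
  · intro s; have := W_nonneg s; positivity

lemma int_fa_nonpos (δ u v : ℝ) (hδ : 0 < δ) (huv : u ≤ v)
    (hsign : ∀ s ∈ Icc u v, Wp s ≤ 0) :
    ∫ s in u..v, |Wp s| / (2 * (W s + δ)) =
      Real.log (W u + δ) / 2 - Real.log (W v + δ) / 2 := by
  have h1 : ∫ s in u..v, |Wp s| / (2 * (W s + δ))
      = ∫ s in u..v, -(Wp s / (2 * (W s + δ))) := by
    apply intervalIntegral.integral_congr
    intro s hs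
    rw [uIcc_of_le huv] at hs
    simp only []
    rw [abs_of_nonpos (hsign s hs)]; ring
  rw [h1]
  have hder : ∀ t ∈ uIcc u v,
      HasDerivAt (fun t => -(Real.log (W t + δ) / 2)) (-(Wp t / (2 * (W t + δ)))) t :=
    fun t _ => (hasDerivAt_g δ t hδ).neg
  have hint : IntervalIntegrable (fun s => -(Wp s / (2 * (W s + δ)))) MeasureTheory.volume u v := by
    apply Continuous.intervalIntegrable
    apply Continuous.neg
    apply Continuous.div (by unfold Wp; continuity)
      (continuous_const.mul (cont_W.add continuous_const))
    intro s; have := W_nonneg s; apply ne_of_gt; simp only [Pi.mul_apply, Pi.add_apply]; linarith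
  rw [intervalIntegral.integral_eq_sub_of_hasDerivAt hder hint]
  ring

lemma int_fa_nonneg (δ u v : ℝ) (hδ : 0 < δ) (huv : u ≤ v)
    (hsign : ∀ s ∈ Icc u v, 0 ≤ Wp s) :
    ∫ s in u..v, |Wp s| / (2 * (W s + δ)) =
      Real.log (W v + δ) / 2 - Real.log (W u + δ) / 2 := by
  have h1 : ∫ s in u..v, |Wp s| / (2 * (W s + δ))
      = ∫ s in u..v, Wp s / (2 * (W s + δ)) := by
    apply intervalIntegral.integral_congr
    intro s hs
    rw [uIcc_of_le huv] at hs
    simp only []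
    rw [abs_of_nonneg (hsign s hs)]
  rw [h1]
  have hder : ∀ t ∈ uIcc u v,
      HasDerivAt (fun t => Real.log (W t + δ) / 2) (Wp t / (2 * (W t + δ))) t :=
    fun t _ => hasDerivAt_g δ t hδ
  have hint : IntervalIntegrable (fun s => Wp s / (2 * (W s + δ))) MeasureTheory.volume u v := by
    apply Continuous.intervalIntegrable
    apply Continuous.div (by unfold Wp; continuity)
      (continuous_const.mul (cont_W.add continuous_const))
    intro s; have := W_nonneg s; apply ne_of_gt; simp only [Pi.mul_apply, Pi.add_apply]; linarith
  rw [intervalIntegral.integral_eq_sub_of_hasDerivAt hder hint]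

/-- For fixed `c₀ ≥ 1` there is `C > 0` depending only on `c₀` with
`G_δ'(r) ≥ C δ³` for all `r ∈ [-c₀-1, c₀+1]` and all `δ ∈ (0, 1/2]`. -/
theorem stmt11 (c₀ : ℝ) (hc₀ : 1 ≤ c₀) :
    ∃ C : ℝ, 0 < C ∧ ∀ δ : ℝ, 0 < δ → δ ≤ 1 / 2 →
      ∀ r ∈ Icc (-c₀ - 1) (c₀ + 1), gfun c₀ δ r ≥ C * δ ^ 3 := by
  set b := c₀ + 1 with hb
  set a := -c₀ - 1 with ha
  have hWb1 : 0 < W b + 1 := by linarith [W_nonneg b]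
  refine ⟨Real.exp (-(c₀ + 1)) / (W b + 1), by positivity, ?_⟩
  intro δ hδ hδ2 r hr
  have hab : a ≤ b := by simp only [ha, hb]; linarith
  have ha1 : a ≤ -1 := by simp only [ha]; linarith
  have h1b : (1 : ℝ) ≤ b := by simp only [hb]; linarith
  have hWpos : ∀ s : ℝ, 0 < W s + δ := fun s => by linarith [W_nonneg s]
  set f : ℝ → ℝ := fun s => (|Wp s| + δ) / (2 * (W s + δ)) with hf
  set fa : ℝ → ℝ := fun s => |Wp s| / (2 * (W s + δ)) with hfa
  set fd : ℝ → ℝ := fun s : ℝ => δ / (2 * (W s + δ)) with hfd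
  have hfint : ∀ u v : ℝ, IntervalIntegrable f MeasureTheory.volume u v :=
    fun u v => (cont_f δ hδ).intervalIntegrable u v
  have hfaint : ∀ u v : ℝ, IntervalIntegrable fa MeasureTheory.volume u v :=
    fun u v => (cont_fa δ hδ).intervalIntegrable u v
  have hfdint : ∀ u v : ℝ, IntervalIntegrable fd MeasureTheory.volume u v :=
    fun u v => (cont_fd δ hδ).intervalIntegrable u v
  -- step 1 : ∫ a..r f ≤ ∫ a..b f
  have step1 : (∫ s in a..r, f s) ≤ ∫ s in a..b, f s := by
    have hsplit := intervalIntegral.integral_add_adjacent_intervals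
      (hfint a r) (hfint r b)
    have hnn : 0 ≤ ∫ s in r..b, f s := by
      apply intervalIntegral.integral_nonneg hr.2
      intro u _
      have := hWpos u
      have : (0:ℝ) < 2 * (W u + δ) := by linarith
      have habs : (0:ℝ) ≤ |Wp u| := abs_nonneg _
      positivity
    linarith
  -- step 2 : split f = fa + fd
  have step2 : (∫ s in a..b, f s) = (∫ s in a..b, fa s) + ∫ s in a..b, fd s := by
    rw [← intervalIntegral.integral_add (hfaint a b) (hfdint a b)]
    apply intervalIntegral.integral_congr
    intro s _
    simp only [hf, hfa, hfd]
    rw [add_div]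
  -- step 3 : compute ∫ fa
  have hW1 : W 1 = 0 := by norm_num [W]
  have hWm1 : W (-1) = 0 := by norm_num [W]
  have hW0 : W 0 = 1/2 := by norm_num [W]
  have hWa : W a = W b := by
    simp only [ha, hb, W]; ring
  have split3 : (∫ s in a..b, fa s) =
      (∫ s in a..(-1), fa s) + (∫ s in (-1)..0, fa s) + (∫ s in (0:ℝ)..1, fa s)
        + ∫ s in (1:ℝ)..b, fa s := by
    rw [intervalIntegral.integral_add_adjacent_intervals (hfaint a (-1)) (hfaint (-1) 0),
      intervalIntegral.integral_add_adjacent_intervals (hfaint a 0) (hfaint 0 1),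
      intervalIntegral.integral_add_adjacent_intervals (hfaint a 1) (hfaint 1 b)]
  have p1 : (∫ s in a..(-1), fa s) = Real.log (W a + δ) / 2 - Real.log (W (-1) + δ) / 2 :=
    int_fa_nonpos δ a (-1) hδ ha1 (fun s hs => by
      simp only [Wp]; nlinarith [hs.1, hs.2, sq_nonneg (s+1)])
  have p2 : (∫ s in (-1:ℝ)..0, fa s) = Real.log (W 0 + δ) / 2 - Real.log (W (-1) + δ) / 2 :=
    int_fa_nonneg δ (-1) 0 hδ (by norm_num) (fun s hs => by
      simp only [Wp]; nlinarith [hs.1, hs.2, sq_nonneg s])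
  have p3 : (∫ s in (0:ℝ)..1, fa s) = Real.log (W 0 + δ) / 2 - Real.log (W 1 + δ) / 2 := by
    rw [int_fa_nonpos δ 0 1 hδ (by norm_num) (fun s hs => by
      simp only [Wp]; nlinarith [hs.1, hs.2, sq_nonneg s])]
  have p4 : (∫ s in (1:ℝ)..b, fa s) = Real.log (W b + δ) / 2 - Real.log (W 1 + δ) / 2 :=
    int_fa_nonneg δ 1 b hδ h1b (fun s hs => by
      simp only [Wp]; nlinarith [hs.1, hs.2, sq_nonneg (s-1)])
  have step3 : (∫ s in a..b, fa s) =
      Real.log (W b + δ) + Real.log (1/2 + δ) - 2 * Real.log δ := by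
    rw [split3, p1, p2, p3, p4, hW1, hWm1, hW0, hWa]
    ring
  -- step 4 : ∫ fd ≤ c₀ + 1
  have step4 : (∫ s in a..b, fd s) ≤ c₀ + 1 := by
    have hle : ∀ s ∈ Icc a b, fd s ≤ 1/2 := by
      intro s _
      simp only [hfd]
      rw [div_le_iff₀ (by linarith [W_nonneg s])]
      linarith [W_nonneg s]
    have := intervalIntegral.integral_mono_on hab (hfdint a b)
      (_root_.intervalIntegrable_const (c := (1/2 : ℝ))) hle
    rw [intervalIntegral.integral_const] at this
    have hba : b - a = 2 * (c₀ + 1) := by simp only [ha, hb]; ring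
    rw [hba, smul_eq_mul] at this
    linarith [this]
  -- combine the integral bound
  have hlog1 : Real.log (W b + δ) ≤ Real.log (W b + 1) :=
    Real.log_le_log (hWpos b) (by linarith)
  have hlog2 : Real.log (1/2 + δ) ≤ 0 := by
    rw [← Real.log_one]
    exact Real.log_le_log (by linarith) (by linarith)
  have hIb : (∫ s in a..r, f s) ≤
      (c₀ + 1) + Real.log (W b + 1) - 2 * Real.log δ := by
    calc (∫ s in a..r, f s) ≤ ∫ s in a..b, f s := step1
    _ = (∫ s in a..b, fa s) + ∫ s in a..b, fd s := step2
    _ ≤ (Real.log (W b + δ) + Real.log (1/2 + δ) - 2 * Real.log δ) + (c₀ + 1) := by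
        rw [step3]; linarith
    _ ≤ (c₀ + 1) + Real.log (W b + 1) - 2 * Real.log δ := by linarith
  -- final estimate
  have hexp : Real.exp (-((c₀ + 1) + Real.log (W b + 1) - 2 * Real.log δ))
      = Real.exp (-(c₀ + 1)) * (W b + 1)⁻¹ * δ ^ 2 := by
    rw [show -((c₀ + 1) + Real.log (W b + 1) - 2 * Real.log δ)
        = -(c₀ + 1) + (-(Real.log (W b + 1))) + Real.log (δ ^ 2) by
      rw [Real.log_pow]; push_cast; ring]
    rw [Real.exp_add, Real.exp_add, Real.exp_log (by positivity : (0:ℝ) < δ ^ 2),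
      Real.exp_neg, Real.exp_neg, Real.exp_log hWb1]
  have hmono : Real.exp (-((c₀ + 1) + Real.log (W b + 1) - 2 * Real.log δ))
      ≤ Real.exp (-(∫ s in a..r, f s)) := Real.exp_le_exp.mpr (by linarith)
  have : gfun c₀ δ r = δ * Real.exp (-(∫ s in a..r, f s)) := rfl
  rw [this, ge_iff_le]
  calc Real.exp (-(c₀ + 1)) / (W b + 1) * δ ^ 3
      = δ * (Real.exp (-(c₀ + 1)) * (W b + 1)⁻¹ * δ ^ 2) := by ring
    _ ≤ δ * Real.exp (-(∫ s in a..r, f s)) := by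
        rw [← hexp]
        exact mul_le_mul_of_nonneg_left hmono (le_of_lt hδ)
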